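/- Let C > 0 and θ > 0, and let β_SP(s) := exp(C(1 + s^{−θ})) for s > 0. Then there exist constants c₁, c₂, t₀ > 0 such that for every t ∈ (0, t₀], the set defining ξ₁(t) is nonempty and c₁·(log(1 + t^{−1}))^{−1/θ} ≤ ξ₁(t) ≤ c₂·(log(1 + t^{−1}))^{−1/θ}, where ξ₁(t) := inf{ r/(1 − t·β_SP(r)) : r > 0, 1 − t·β_SP(r) > 0 }. -/

import Mathlib

open MeasureTheory Real Set

/-- Entropy of a nonnegative function `g` with respect to `μ`:
`Ent_μ(g) = μ(g log g) - μ(g) log μ(g)` (with the convention `0 · log 0 = 0`). -/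
noncomputable def Ent {Ω : Type*} [MeasurableSpace Ω] (μ : Measure Ω) (g : Ω → ℝ) : ℝ :=
  (∫ x, g x * Real.log (g x) ∂μ) - (∫ x, g x ∂μ) * Real.log (∫ x, g x ∂μ)

/-- Truncation `f_n := min((|f| - δ^{n/2})₊, δ^{(n+1)/2} - δ^{n/2})`. -/
noncomputable def trunc {Ω : Type*} (f : Ω → ℝ) (δ : ℝ) (n : ℕ) : Ω → ℝ :=
  fun x => min (max (|f x| - δ ^ ((n : ℝ) / 2)) 0) (δ ^ (((n : ℝ) + 1) / 2) - δ ^ ((n : ℝ) / 2))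

/-- The `μ`-essential supremum of `|f|`. -/
noncomputable def essNorm {Ω : Type*} [MeasurableSpace Ω] (μ : Measure Ω) (f : Ω → ℝ) : ℝ :=
  (eLpNorm f ⊤ μ).toReal

/-- `ξ₁(t) := inf { r / (1 - t β(r)) : r > 0, 1 - t β(r) > 0 }`. -/
noncomputable def xi1 (β : ℝ → ℝ) (t : ℝ) : ℝ :=
  sInf {y | ∃ r, 0 < r ∧ 0 < 1 - t * β r ∧ y = r / (1 - t * β r)}

/-- `ξ₂(t) := inf { r / (t - β(r)) : r > 0, t - β(r) > 0 }`. -/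
noncomputable def xi2 (β : ℝ → ℝ) (t : ℝ) : ℝ :=
  sInf {y | ∃ r, 0 < r ∧ 0 < t - β r ∧ y = r / (t - β r)}

/-- Two-sided estimate of `ξ₁` for the rate function `β_SP(s) = exp(C(1 + s^{-θ}))`:
`ξ₁(t) ≍ log^{-1/θ}(1 + t⁻¹)` for small `t`. -/
theorem xi1_asymptotics (C θ : ℝ) (hC : 0 < C) (hθ : 0 < θ) :
    ∃ c₁ > (0 : ℝ), ∃ c₂ > (0 : ℝ), ∃ t₀ > (0 : ℝ), ∀ t : ℝ, 0 < t → t ≤ t₀ →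
      ({y | ∃ r, 0 < r ∧ 0 < 1 - t * Real.exp (C * (1 + r ^ (-θ))) ∧
          y = r / (1 - t * Real.exp (C * (1 + r ^ (-θ))))}.Nonempty ∧
        c₁ * Real.log (1 + t⁻¹) ^ (-(1 / θ)) ≤
          xi1 (fun r => Real.exp (C * (1 + r ^ (-θ)))) t ∧
        xi1 (fun r => Real.exp (C * (1 + r ^ (-θ)))) t ≤
          c₂ * Real.log (1 + t⁻¹) ^ (-(1 / θ))) := by
  have hθ' : θ ≠ 0 := ne_of_gt hθ
  have hlog2 : (0:ℝ) < Real.log 2 := Real.log_pos (by norm_num)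
  refine ⟨C ^ (1/θ), Real.rpow_pos_of_pos hC _,
    2 * (2*C) ^ (1/θ), by positivity,
    Real.exp (-(2*C + 4*Real.log 2)), Real.exp_pos _, ?_⟩
  intro t ht ht0
  set L := Real.log (1 + t⁻¹) with hLdef
  have htinv : Real.exp (2*C + 4*Real.log 2) ≤ t⁻¹ := by
    calc Real.exp (2*C + 4*Real.log 2) = (Real.exp (-(2*C + 4*Real.log 2)))⁻¹ := by
          rw [← Real.exp_neg, neg_neg]
    _ ≤ t⁻¹ := by
        apply inv_anti₀ ht ht0
  have htinv1 : (1:ℝ) ≤ t⁻¹ := by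
    refine le_trans ?_ htinv
    rw [show (1:ℝ) = Real.exp 0 by simp]
    exact Real.exp_le_exp.2 (by nlinarith)
  have hx1 : (1:ℝ) < 1 + t⁻¹ := by linarith
  have hL : 2*C + 4*Real.log 2 ≤ L := by
    rw [hLdef, Real.le_log_iff_exp_le (by linarith)]
    linarith
  have h2C : (0:ℝ) < 2*C := by linarith
  have hL0 : 0 < L := by nlinarith
  -- relation between L and log(1/t)
  have hlogt : L ≤ Real.log 2 - Real.log t := by
    have h1 : (1:ℝ) + t⁻¹ ≤ 2 * t⁻¹ := by linarith
    calc L ≤ Real.log (2 * t⁻¹) := Real.log_le_log (by linarith) h1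
    _ = Real.log 2 + Real.log t⁻¹ := Real.log_mul (by norm_num) (by positivity)
    _ = Real.log 2 - Real.log t := by rw [Real.log_inv]; ring
  -- witness r₀
  set r₀ : ℝ := (2*C/L) ^ (1/θ) with hr₀def
  have hr₀pos : 0 < r₀ := Real.rpow_pos_of_pos (by positivity) _
  have hr₀pow : r₀ ^ (-θ) = L / (2*C) := by
    rw [hr₀def, ← Real.rpow_mul (by positivity : (0:ℝ) ≤ 2*C/L),
      show (1/θ) * (-θ) = (-1 : ℝ) by field_simp,
      Real.rpow_neg_one, inv_div]
  have hβr₀ : t * Real.exp (C * (1 + r₀ ^ (-θ))) ≤ 1/2 := by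
    have hexp : Real.exp (C * (1 + r₀ ^ (-θ))) ≤ 1/(2*t) := by
      rw [← Real.le_log_iff_exp_le (by positivity : (0:ℝ) < 1/(2*t))]
      rw [hr₀pow]
      have : Real.log (1/(2*t)) = -Real.log 2 - Real.log t := by
        rw [one_div, Real.log_inv, Real.log_mul (by norm_num) (ne_of_gt ht)]; ring
      rw [this]
      have hCL : C * (1 + L/(2*C)) = C + L/2 := by field_simp
      rw [hCL]
      nlinarith
    calc t * Real.exp (C * (1 + r₀ ^ (-θ))) ≤ t * (1/(2*t)) :=
          mul_le_mul_of_nonneg_left hexp ht.le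
    _ = 1/2 := by field_simp
  have hd₀ : (1:ℝ)/2 ≤ 1 - t * Real.exp (C * (1 + r₀ ^ (-θ))) := by linarith
  have hd₀pos : 0 < 1 - t * Real.exp (C * (1 + r₀ ^ (-θ))) := by linarith
  have hmem : r₀ / (1 - t * Real.exp (C * (1 + r₀ ^ (-θ)))) ∈
      {y | ∃ r, 0 < r ∧ 0 < 1 - t * Real.exp (C * (1 + r ^ (-θ))) ∧
        y = r / (1 - t * Real.exp (C * (1 + r ^ (-θ))))} :=
    ⟨r₀, hr₀pos, hd₀pos, rfl⟩
  have hne : Set.Nonempty {y | ∃ r, 0 < r ∧ 0 < 1 - t * Real.exp (C * (1 + r ^ (-θ))) ∧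
      y = r / (1 - t * Real.exp (C * (1 + r ^ (-θ))))} := ⟨_, hmem⟩
  -- lower bound for every element
  have hlow : ∀ y ∈ {y | ∃ r, 0 < r ∧ 0 < 1 - t * Real.exp (C * (1 + r ^ (-θ))) ∧
      y = r / (1 - t * Real.exp (C * (1 + r ^ (-θ))))},
      C ^ (1/θ) * L ^ (-(1/θ)) ≤ y := by
    rintro y ⟨r, hr, hd, rfl⟩
    set d := 1 - t * Real.exp (C * (1 + r ^ (-θ))) with hddef
    have hexp_pos : 0 < Real.exp (C * (1 + r ^ (-θ))) := Real.exp_pos _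
    have hd1 : d ≤ 1 := by
      have : 0 < t * Real.exp (C * (1 + r ^ (-θ))) := by positivity
      simp only [hddef]; linarith
    have hry : r ≤ r / d := by
      rw [le_div_iff₀ hd]
      nlinarith
    have hrθ : r ^ (-θ) < L / C := by
      have hβlt : Real.exp (C * (1 + r ^ (-θ))) < 1 + t⁻¹ := by
        have h1 : t * Real.exp (C * (1 + r ^ (-θ))) < 1 := by simp only [hddef] at hd; linarith
        have h2 : Real.exp (C * (1 + r ^ (-θ))) < t⁻¹ := by
          rw [lt_inv_comm₀ hexp_pos ht] at *
          · rw [← one_div]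
            rw [lt_div_iff₀ hexp_pos]
            linarith [mul_comm t (Real.exp (C * (1 + r ^ (-θ))))]
        linarith
      have h3 : C * (1 + r ^ (-θ)) < L := by
        rw [hLdef, Real.lt_log_iff_exp_lt (by linarith)]
        exact hβlt
      have hrp : 0 < r ^ (-θ) := Real.rpow_pos_of_pos hr _
      rw [lt_div_iff₀ hC]
      nlinarith
    have hrlb : (L/C) ^ (-(1/θ)) < r := by
      have := Real.rpow_lt_rpow_of_neg (Real.rpow_pos_of_pos hr (-θ)) hrθ
        (by simp [hθ', hθ.le]; positivity : -(1/θ) < 0)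
      rwa [← Real.rpow_mul hr.le, show (-θ) * (-(1/θ)) = (1:ℝ) by field_simp,
        Real.rpow_one] at this
    have heq : (L/C) ^ (-(1/θ)) = C ^ (1/θ) * L ^ (-(1/θ)) := by
      rw [Real.div_rpow hL0.le hC.le, Real.rpow_neg hC.le, div_eq_mul_inv, inv_inv,
        mul_comm]
    calc C ^ (1/θ) * L ^ (-(1/θ)) = (L/C) ^ (-(1/θ)) := heq.symm
    _ ≤ r := hrlb.le
    _ ≤ r / d := hry
  have hbdd : BddBelow {y | ∃ r, 0 < r ∧ 0 < 1 - t * Real.exp (C * (1 + r ^ (-θ))) ∧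
      y = r / (1 - t * Real.exp (C * (1 + r ^ (-θ))))} :=
    ⟨_, hlow⟩
  refine ⟨hne, ?_, ?_⟩
  · exact le_csInf hne hlow
  · calc xi1 (fun r => Real.exp (C * (1 + r ^ (-θ)))) t ≤
        r₀ / (1 - t * Real.exp (C * (1 + r₀ ^ (-θ)))) := csInf_le hbdd hmem
    _ ≤ r₀ / (1/2) := div_le_div_of_nonneg_left hr₀pos.le (by norm_num) hd₀
    _ = 2 * r₀ := by ring
    _ = 2 * (2*C) ^ (1/θ) * L ^ (-(1/θ)) := by
        rw [hr₀def, Real.div_rpow h2C.le hL0.le, Real.rpow_neg hL0.le, div_eq_mul_inv]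
        ring
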